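/- If two symmetric 2×2 matrices A = [a, b; b, a] and C = [c, d; d, c] (with complex entries) both satisfy the fixed-point property a² - b² = λ and c² - d² = λ, and a + c ≠ 0, then the matrix obtained by assembling A and C at a shared node and eliminating the interior degree of freedom (Schur complement) also satisfies the fixed-point property: its diagonal entry squared minus its off-diagonal entry squared equals λ. -/
import Mathlib


theorem stmt_3 (a b c d lam : ℂ) (hA : a ^ 2 - b ^ 2 = lam) (hC : c ^ 2 - d ^ 2 = lam)
    (hac : a + c ≠ 0) :
    (a - b ^ 2 / (a + c)) ^ 2 - (-(b * d) / (a + c)) ^ 2 = lam ∧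
      a - b ^ 2 / (a + c) = c - d ^ 2 / (a + c) := by
  have hb : b ^ 2 = a ^ 2 - lam := by linear_combination -hA
  have hd : d ^ 2 = c ^ 2 - lam := by linear_combination -hC
  constructor
  · field_simp
    linear_combination (b ^ 2 - a ^ 2 - 2 * a * c - d ^ 2 - lam) * hb - (a ^ 2 - lam) * hd
  · field_simp
    linear_combination hd - hb
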